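/- Let $a<b$ be real, let $T_0:(a,b)\to M_n(\mathbb{C})$ be differentiable and $T_1,T_2,T_3:(a,b)\to M_n(\mathbb{C})$ be continuous, all skew-hermitian valued, let $c,x_1,x_2,x_3\in\mathbb{R}$, and set $\gamma = T_0 - ic$. Suppose $v:(a,b)\to\mathbb{C}^n$ is twice differentiable and satisfies $(v'+\gamma v)' + \gamma(v'+\gamma v) + \sum_{j=1}^3 (T_j - ix_j)^2 v = 0$ on $(a,b)$. If $v(z_1)=v(z_2)=0$ for some $z_1<z_2$ in $(a,b)$, then $v(z)=0$ for all $z\in[z_1,z_2]$. -/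

import Mathlib

open Matrix Set

lemma dot_star_comm {n : ℕ} (u w : Fin n → ℂ) : (u ⬝ᵥ star w).re = (w ⬝ᵥ star u).re := by
  rw [Matrix.dotProduct_star u w]; simp [Complex.star_def]

lemma dot_self_nonneg {n : ℕ} (u : Fin n → ℂ) : 0 ≤ (u ⬝ᵥ star u).re := by
  simp only [dotProduct, Pi.star_apply, Complex.star_def, Complex.mul_conj]
  rw [Complex.re_sum]
  exact Finset.sum_nonneg fun i _ => by simpa using Complex.normSq_nonneg (u i)

lemma dot_self_eq_sum_normSq {n : ℕ} (u : Fin n → ℂ) :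
    (u ⬝ᵥ star u).re = ∑ i, Complex.normSq (u i) := by
  simp only [dotProduct, Pi.star_apply, Complex.star_def, Complex.mul_conj]
  rw [Complex.re_sum]
  simp

lemma skew_dot {n : ℕ} {A : Matrix (Fin n) (Fin n) ℂ} (hA : Aᴴ = -A)
    (u w : Fin n → ℂ) :
    A.mulVec u ⬝ᵥ star w = -(u ⬝ᵥ star (A.mulVec w)) := by
  have h : ∀ i j : Fin n, star (A j i) = -A i j := fun i j => by
    have := congrFun (congrFun hA i) j
    simpa [Matrix.conjTranspose_apply, Matrix.neg_apply] using this
  simp only [Matrix.mulVec, dotProduct, Pi.star_apply, star_sum, star_mul',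
    Finset.sum_mul, Finset.mul_sum]
  rw [Finset.sum_comm, ← Finset.sum_neg_distrib]
  refine Finset.sum_congr rfl fun i _ => ?_
  rw [← Finset.sum_neg_distrib]
  refine Finset.sum_congr rfl fun j _ => ?_
  rw [h j i]
  ring

lemma skew_dot_self {n : ℕ} {A : Matrix (Fin n) (Fin n) ℂ} (hA : Aᴴ = -A)
    (u : Fin n → ℂ) : (A.mulVec u ⬝ᵥ star u).re = 0 := by
  have h1 := skew_dot hA u u
  have h2 := dot_star_comm u (A.mulVec u)
  have := congrArg Complex.re h1
  rw [Complex.neg_re] at this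
  linarith

lemma key_ineq {n : ℕ} (G M S1 S2 S3 : Matrix (Fin n) (Fin n) ℂ)
    (hG : Gᴴ = -G) (hM : Mᴴ = -M) (h1 : S1ᴴ = -S1) (h2 : S2ᴴ = -S2) (h3 : S3ᴴ = -S3)
    (V V' V'' : Fin n → ℂ)
    (hode : (V'' + M.mulVec V + G.mulVec V')
        + G.mulVec (V' + G.mulVec V)
        + (S1*S1).mulVec V + (S2*S2).mulVec V + (S3*S3).mulVec V = 0) :
    0 ≤ (V'' ⬝ᵥ star V).re + (V' ⬝ᵥ star V').re := by
  set w : Fin n → ℂ := V' + G.mulVec V with hw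
  have hV'' : V'' = -(M.mulVec V) - G.mulVec V' - G.mulVec w
      - (S1*S1).mulVec V - (S2*S2).mulVec V - (S3*S3).mulVec V := by
    linear_combination hode
  have e1 := skew_dot hG V' V
  have e2 := skew_dot hG w V
  have e3 : (S1*S1).mulVec V ⬝ᵥ star V = -(S1.mulVec V ⬝ᵥ star (S1.mulVec V)) := by
    rw [← Matrix.mulVec_mulVec]; exact skew_dot h1 _ _
  have e4 : (S2*S2).mulVec V ⬝ᵥ star V = -(S2.mulVec V ⬝ᵥ star (S2.mulVec V)) := by
    rw [← Matrix.mulVec_mulVec]; exact skew_dot h2 _ _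
  have e5 : (S3*S3).mulVec V ⬝ᵥ star V = -(S3.mulVec V ⬝ᵥ star (S3.mulVec V)) := by
    rw [← Matrix.mulVec_mulVec]; exact skew_dot h3 _ _
  have e0 := skew_dot_self hM V
  have hre : (V'' ⬝ᵥ star V).re
      = (V' ⬝ᵥ star (G.mulVec V)).re + (w ⬝ᵥ star (G.mulVec V)).re
        + (S1.mulVec V ⬝ᵥ star (S1.mulVec V)).re
        + (S2.mulVec V ⬝ᵥ star (S2.mulVec V)).re
        + (S3.mulVec V ⬝ᵥ star (S3.mulVec V)).re := by
    rw [hV'']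
    simp only [sub_dotProduct, neg_dotProduct, e1, e2, e3, e4, e5,
      Complex.sub_re, Complex.neg_re]
    linarith
  have hwexp : (w ⬝ᵥ star w).re
      = (V' ⬝ᵥ star V').re + 2*(V' ⬝ᵥ star (G.mulVec V)).re
        + (G.mulVec V ⬝ᵥ star (G.mulVec V)).re := by
    have hc := dot_star_comm (G.mulVec V) V'
    rw [hw]
    simp only [add_dotProduct, star_add, dotProduct_add, Complex.add_re]
    linarith
  have hwg : (w ⬝ᵥ star (G.mulVec V)).re
      = (V' ⬝ᵥ star (G.mulVec V)).re + (G.mulVec V ⬝ᵥ star (G.mulVec V)).re := by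
    rw [hw]
    simp only [add_dotProduct, Complex.add_re]
  have p1 := dot_self_nonneg w
  have p2 := dot_self_nonneg (S1.mulVec V)
  have p3 := dot_self_nonneg (S2.mulVec V)
  have p4 := dot_self_nonneg (S3.mulVec V)
  linarith

lemma smul_one_skew {n : ℕ} (x : ℝ) :
    ((Complex.I * ((x : ℝ) : ℂ)) • (1 : Matrix (Fin n) (Fin n) ℂ))ᴴ
      = -((Complex.I * ((x : ℝ) : ℂ)) • (1 : Matrix (Fin n) (Fin n) ℂ)) := by
  rw [Matrix.conjTranspose_smul, Matrix.conjTranspose_one, ← neg_smul]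
  congr 1
  simp [Complex.star_def, Complex.conj_I, Complex.conj_ofReal]

lemma sub_smul_one_skew {n : ℕ} (x : ℝ) (T : Matrix (Fin n) (Fin n) ℂ) (hT : Tᴴ = -T) :
    (T - (Complex.I * ((x : ℝ) : ℂ)) • (1 : Matrix (Fin n) (Fin n) ℂ))ᴴ
      = -(T - (Complex.I * ((x : ℝ) : ℂ)) • (1 : Matrix (Fin n) (Fin n) ℂ)) := by
  rw [Matrix.conjTranspose_sub, hT, smul_one_skew]
  abel

/-- A solution of `D₁*D₁ v = 0` (for a skew-hermitian background)
vanishing at two points vanishes identically between them. -/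
theorem vanishing_between_zeros {n : ℕ} (a b : ℝ) (hab : a < b)
    (T0 T0' T1 T2 T3 : ℝ → Matrix (Fin n) (Fin n) ℂ)
    (hT0 : ∀ z ∈ Ioo a b, ∀ i j, HasDerivAt (fun t => T0 t i j) (T0' z i j) z)
    (hT1 : ∀ i j, ContinuousOn (fun z => T1 z i j) (Ioo a b))
    (hT2 : ∀ i j, ContinuousOn (fun z => T2 z i j) (Ioo a b))
    (hT3 : ∀ i j, ContinuousOn (fun z => T3 z i j) (Ioo a b))
    (hskew : ∀ z ∈ Ioo a b,
        (T0 z)ᴴ = -T0 z ∧ (T1 z)ᴴ = -T1 z ∧ (T2 z)ᴴ = -T2 z ∧ (T3 z)ᴴ = -T3 z)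
    (c x1 x2 x3 : ℝ)
    (v v' v'' : ℝ → Fin n → ℂ)
    (hv : ∀ z ∈ Ioo a b, ∀ i, HasDerivAt (fun t => v t i) (v' z i) z)
    (hv' : ∀ z ∈ Ioo a b, ∀ i, HasDerivAt (fun t => v' t i) (v'' z i) z)
    (hode : ∀ z ∈ Ioo a b,
        (v'' z + (T0' z).mulVec (v z)
            + (T0 z - (Complex.I * ((c : ℝ) : ℂ))
                • (1 : Matrix (Fin n) (Fin n) ℂ)).mulVec (v' z))
          + (T0 z - (Complex.I * ((c : ℝ) : ℂ))
                • (1 : Matrix (Fin n) (Fin n) ℂ)).mulVec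
              (v' z + (T0 z - (Complex.I * ((c : ℝ) : ℂ))
                • (1 : Matrix (Fin n) (Fin n) ℂ)).mulVec (v z))
          + ((T1 z - (Complex.I * ((x1 : ℝ) : ℂ)) • (1 : Matrix (Fin n) (Fin n) ℂ))
              * (T1 z - (Complex.I * ((x1 : ℝ) : ℂ)) • (1 : Matrix (Fin n) (Fin n) ℂ))).mulVec (v z)
          + ((T2 z - (Complex.I * ((x2 : ℝ) : ℂ)) • (1 : Matrix (Fin n) (Fin n) ℂ))
              * (T2 z - (Complex.I * ((x2 : ℝ) : ℂ)) • (1 : Matrix (Fin n) (Fin n) ℂ))).mulVec (v z)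
          + ((T3 z - (Complex.I * ((x3 : ℝ) : ℂ)) • (1 : Matrix (Fin n) (Fin n) ℂ))
              * (T3 z - (Complex.I * ((x3 : ℝ) : ℂ)) • (1 : Matrix (Fin n) (Fin n) ℂ))).mulVec (v z)
          = 0)
    (z₁ z₂ : ℝ) (hz₁ : z₁ ∈ Ioo a b) (hz₂ : z₂ ∈ Ioo a b) (h12 : z₁ < z₂)
    (hv1 : v z₁ = 0) (hv2 : v z₂ = 0) :
    ∀ z ∈ Icc z₁ z₂, v z = 0 := by
  -- skewness of T0'
  have hT0'skew : ∀ z ∈ Ioo a b, (T0' z)ᴴ = -T0' z := by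
    intro z hz
    ext i j
    have hd1 : HasDerivAt (fun t => star (T0 t j i)) (star (T0' z j i)) z :=
      (hT0 z hz j i).star
    have hd2 : HasDerivAt (fun t => -(T0 t i j)) (-(T0' z i j)) z :=
      (hT0 z hz i j).neg
    have heq : (fun t => star (T0 t j i)) =ᶠ[nhds z] (fun t => -(T0 t i j)) := by
      filter_upwards [Ioo_mem_nhds hz.1 hz.2] with t ht
      have h := congrFun (congrFun (hskew t ht).1 i) j
      simpa [Matrix.conjTranspose_apply, Matrix.neg_apply] using h
    have huniq : -(T0' z i j) = star (T0' z j i) :=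
      (hd2.congr_of_eventuallyEq heq).unique hd1
    simp only [Matrix.conjTranspose_apply, Matrix.neg_apply]
    exact huniq.symm
  -- first derivative of ‖v‖²
  have hf1d : ∀ z ∈ Ioo a b, HasDerivAt (fun t => (v t ⬝ᵥ star (v t)).re)
      ((v' z ⬝ᵥ star (v z) + v z ⬝ᵥ star (v' z)).re) z := by
    intro z hz
    have hg : HasDerivAt (fun t => v t ⬝ᵥ star (v t))
        (v' z ⬝ᵥ star (v z) + v z ⬝ᵥ star (v' z)) z := by
      simp only [dotProduct, Pi.star_apply]
      rw [← Finset.sum_add_distrib]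
      exact HasDerivAt.fun_sum fun i _ => (hv z hz i).mul ((hv z hz i).star)
    exact Complex.reCLM.hasFDerivAt.comp_hasDerivAt z hg
  -- second derivative of ‖v‖²
  have hf2d : ∀ z ∈ Ioo a b,
      HasDerivAt (fun t => (v' t ⬝ᵥ star (v t) + v t ⬝ᵥ star (v' t)).re)
        ((v'' z ⬝ᵥ star (v z) + v' z ⬝ᵥ star (v' z)
          + (v' z ⬝ᵥ star (v' z) + v z ⬝ᵥ star (v'' z))).re) z := by
    intro z hz
    have hg1 : HasDerivAt (fun t => v' t ⬝ᵥ star (v t))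
        (v'' z ⬝ᵥ star (v z) + v' z ⬝ᵥ star (v' z)) z := by
      simp only [dotProduct, Pi.star_apply]
      rw [← Finset.sum_add_distrib]
      exact HasDerivAt.fun_sum fun i _ => (hv' z hz i).mul ((hv z hz i).star)
    have hg2 : HasDerivAt (fun t => v t ⬝ᵥ star (v' t))
        (v' z ⬝ᵥ star (v' z) + v z ⬝ᵥ star (v'' z)) z := by
      simp only [dotProduct, Pi.star_apply]
      rw [← Finset.sum_add_distrib]
      exact HasDerivAt.fun_sum fun i _ => (hv z hz i).mul ((hv' z hz i).star)
    exact Complex.reCLM.hasFDerivAt.comp_hasDerivAt z (hg1.add hg2)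
  -- second derivative nonneg
  have hf2nonneg : ∀ z ∈ Ioo a b,
      0 ≤ (v'' z ⬝ᵥ star (v z) + v' z ⬝ᵥ star (v' z)
          + (v' z ⬝ᵥ star (v' z) + v z ⬝ᵥ star (v'' z))).re := by
    intro z hz
    obtain ⟨hs0, hs1, hs2, hs3⟩ := hskew z hz
    have key := key_ineq
      (T0 z - (Complex.I * ((c : ℝ) : ℂ)) • (1 : Matrix (Fin n) (Fin n) ℂ))
      (T0' z)
      (T1 z - (Complex.I * ((x1 : ℝ) : ℂ)) • (1 : Matrix (Fin n) (Fin n) ℂ))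
      (T2 z - (Complex.I * ((x2 : ℝ) : ℂ)) • (1 : Matrix (Fin n) (Fin n) ℂ))
      (T3 z - (Complex.I * ((x3 : ℝ) : ℂ)) • (1 : Matrix (Fin n) (Fin n) ℂ))
      (sub_smul_one_skew c (T0 z) hs0) (hT0'skew z hz)
      (sub_smul_one_skew x1 (T1 z) hs1) (sub_smul_one_skew x2 (T2 z) hs2)
      (sub_smul_one_skew x3 (T3 z) hs3)
      (v z) (v' z) (v'' z) (hode z hz)
    have hc := dot_star_comm (v z) (v'' z)
    simp only [Complex.add_re]
    linarith
  -- convexity of f on [z₁, z₂]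
  have hsub : Icc z₁ z₂ ⊆ Ioo a b := fun t ht =>
    ⟨lt_of_lt_of_le hz₁.1 ht.1, lt_of_le_of_lt ht.2 hz₂.2⟩
  have hsubi : interior (Icc z₁ z₂) ⊆ Ioo a b := fun t ht => hsub (interior_subset ht)
  have hconv : ConvexOn ℝ (Icc z₁ z₂) (fun t => (v t ⬝ᵥ star (v t)).re) := by
    refine convexOn_of_hasDerivWithinAt2_nonneg (convex_Icc z₁ z₂)
      (f' := fun z => (v' z ⬝ᵥ star (v z) + v z ⬝ᵥ star (v' z)).re)
      (f'' := fun z => (v'' z ⬝ᵥ star (v z) + v' z ⬝ᵥ star (v' z)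
          + (v' z ⬝ᵥ star (v' z) + v z ⬝ᵥ star (v'' z))).re)
      (fun x hx => ((hf1d x (hsub hx)).continuousAt).continuousWithinAt)
      (fun x hx => (hf1d x (hsubi hx)).hasDerivWithinAt)
      (fun x hx => (hf2d x (hsubi hx)).hasDerivWithinAt)
      (fun x hx => hf2nonneg x (hsubi hx))
  -- conclude
  intro z hz
  have hmem1 : z₁ ∈ Icc z₁ z₂ := left_mem_Icc.2 h12.le
  have hmem2 : z₂ ∈ Icc z₁ z₂ := right_mem_Icc.2 h12.le
  have hseg : z ∈ segment ℝ z₁ z₂ := by rwa [segment_eq_Icc h12.le]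
  have hle := hconv.le_on_segment hmem1 hmem2 hseg
  have h1 : (v z₁ ⬝ᵥ star (v z₁)).re = 0 := by simp [hv1]
  have h2 : (v z₂ ⬝ᵥ star (v z₂)).re = 0 := by simp [hv2]
  rw [h1, h2, max_self] at hle
  have hge := dot_self_nonneg (v z)
  have hzero : (v z ⬝ᵥ star (v z)).re = 0 := le_antisymm hle hge
  rw [dot_self_eq_sum_normSq] at hzero
  funext i
  have := (Finset.sum_eq_zero_iff_of_nonneg
    (fun j _ => Complex.normSq_nonneg (v z j))).1 hzero i (Finset.mem_univ i)
  exact Complex.normSq_eq_zero.1 this
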